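/- Let v be a ℤⁿ-valued valuation on ℂ[x₁,…,xₙ] such that for every finite-dimensional ℂ-subspace L ⊆ ℂ[x₁,…,xₙ], the set v(L \ {0}) has cardinality equal to dim_ℂ L, and let v' be its extension to ℂ[x₁,…,x_{n+1}] defined by v'(x_{n+1}^e·g) = (v(g|_{x_{n+1}=0}), e) for x_{n+1} not dividing g. Let I ⊆ ℂ[x₀,…,xₙ] be a homogeneous ideal and I' ⊆ ℂ[x₀,…,x_{n+1}] its extension. Let Δ(I) ⊆ ℝ^(n+1) be the Newton–Okounkov body of I constructed from v, and Δ(I') ⊆ ℝ^(n+2) the Newton–Okounkov body of I' constructed from v'. Then Δ(I') = Δ(I) × ℝ_{≥0}, i.e. Δ(I') = {(a₀,…,aₙ,a_{n+1}) ∈ ℝ^(n+2) : (a₀,…,aₙ) ∈ Δ(I) and a_{n+1} ≥ 0}. -/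

import Mathlib

open MvPolynomial

/-- The lexicographic linear order on `ℤⁿ`. -/
noncomputable instance lexPiIntLinearOrder (n : ℕ) : LinearOrder (Lex (Fin n → ℤ)) :=
  @Pi.Lex.linearOrder (Fin n) (fun _ => ℤ) Fin.instLinearOrder
    (inferInstanceAs (WellFoundedLT (Fin n))) inferInstance

noncomputable instance lexPiIntMin (n : ℕ) : Min (Lex (Fin n → ℤ)) :=
  @LinearOrder.toMin _ (lexPiIntLinearOrder n)

/-- The degree-`s` homogeneous component of an ideal in `ℂ[x₀,…,xₘ]`,
as a `ℂ`-subspace of the polynomial ring. -/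
noncomputable def idealComponent {m : ℕ} (I : Ideal (MvPolynomial (Fin (m + 1)) ℂ)) (s : ℕ) :
    Submodule ℂ (MvPolynomial (Fin (m + 1)) ℂ) :=
  I.restrictScalars ℂ ⊓ homogeneousSubmodule (Fin (m + 1)) ℂ s

/-- Setting `x₀ = 1`: the dehomogenization map `ℂ[x₀,…,xₘ] → ℂ[x₁,…,xₘ]`. -/
noncomputable def dehom (m : ℕ) : MvPolynomial (Fin (m + 1)) ℂ →ₐ[ℂ] MvPolynomial (Fin m) ℂ :=
  aeval (Fin.cases 1 X)

/-- The graded semigroup `U_I ⊆ ℝᵐ × ℝ²` of a homogeneous ideal `I ⊆ ℂ[x₀,…,xₘ]` with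
respect to a `ℤᵐ`-valued valuation `w` on `ℂ[x₁,…,xₘ]`:
`U_I = {(a,s,t) : s,t ∈ ℤ_{≥0}, a ∈ w(((Iᵗ)_s)|_{x₀=1})}`. -/
def gradedSemigroup {m : ℕ} (w : MvPolynomial (Fin m) ℂ → (Fin m → ℤ))
    (I : Ideal (MvPolynomial (Fin (m + 1)) ℂ)) : Set ((Fin m → ℝ) × ℝ × ℝ) :=
  {p | ∃ s t : ℕ, ∃ α ∈ w ''
      ((⇑(dehom m) '' ((idealComponent (I ^ t) s : Set (MvPolynomial (Fin (m + 1)) ℂ))) \ {0})),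
    p = (fun i => (α i : ℝ), (s : ℝ), (t : ℝ))}

/-- The smallest closed convex cone containing a subset `U` of a real vector space. -/
def closedConvexConeHull {E : Type*} [AddCommGroup E] [Module ℝ E] [TopologicalSpace E]
    (U : Set E) : Set E :=
  ⋂₀ {C : Set E | U ⊆ C ∧ IsClosed C ∧ Convex ℝ C ∧ ∀ c : ℝ, 0 ≤ c → ∀ x ∈ C, c • x ∈ C}

/-- The slice `underlineΔ(I) = Σ(U_I) ∩ {t = 1} ⊆ ℝᵐ × ℝ`. -/
def underlineDelta {m : ℕ} (w : MvPolynomial (Fin m) ℂ → (Fin m → ℤ))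
    (I : Ideal (MvPolynomial (Fin (m + 1)) ℂ)) : Set ((Fin m → ℝ) × ℝ) :=
  {p | (p.1, p.2, (1 : ℝ)) ∈ closedConvexConeHull (gradedSemigroup w I)}

/-- The shear isomorphism `τ((a₁,…,aₘ),s) = (s − (a₁+⋯+aₘ), a₁,…,aₘ)`. -/
def tauMap (m : ℕ) : (Fin m → ℝ) × ℝ → (Fin (m + 1) → ℝ) :=
  fun p => Fin.cons (p.2 - ∑ i, p.1 i) p.1

/-- The Newton–Okounkov body `Δ(I) ⊆ ℝ^(m+1)` of a homogeneous ideal `I ⊆ ℂ[x₀,…,xₘ]`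
with respect to a valuation `w` on `ℂ[x₁,…,xₘ]`. -/
def NObody {m : ℕ} (w : MvPolynomial (Fin m) ℂ → (Fin m → ℤ))
    (I : Ideal (MvPolynomial (Fin (m + 1)) ℂ)) : Set (Fin (m + 1) → ℝ) :=
  tauMap m '' underlineDelta w I

-- ### auxiliary
noncomputable def EE (n : ℕ) : MvPolynomial (Fin (n+2)) ℂ ≃ₐ[ℂ] Polynomial (MvPolynomial (Fin (n+1)) ℂ) :=
  (renameEquiv ℂ (finRotate (n+2))).trans (finSuccEquiv ℂ (n+1))

theorem EE_X_last (n : ℕ) : EE n (X (Fin.last (n+1))) = Polynomial.X := by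
  simp [EE, finRotate_last, finSuccEquiv_X_zero]

theorem EE_rename (n : ℕ) (g : MvPolynomial (Fin (n+1)) ℂ) :
    EE n (rename Fin.castSucc g) = Polynomial.C g := by
  have : ((EE n).toAlgHom.comp (rename (Fin.castSucc : Fin (n+1) → Fin (n+2)))) =
      (Polynomial.CAlgHom : MvPolynomial (Fin (n+1)) ℂ →ₐ[ℂ] _) := by
    apply MvPolynomial.algHom_ext
    intro j
    simp [EE, Polynomial.CAlgHom, finRotate_succ_apply, Fin.coeSucc_eq_succ, finSuccEquiv_X_succ]
  exact congrFun (congrArg (fun (h : _ →ₐ[ℂ] _) => h.toFun) this) g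

lemma weight_one_cons {n : ℕ} (e : ℕ) (m : Fin n →₀ ℕ) :
    (Finsupp.weight 1) (Finsupp.cons e m) = e + (Finsupp.weight 1) m := by
  simp only [Finsupp.weight_apply, Pi.one_apply, smul_eq_mul, mul_one]
  exact Finsupp.sum_cons n m e

theorem decompE (n : ℕ) (f : MvPolynomial (Fin (n+2)) ℂ) :
    f = ∑ e ∈ Finset.range ((EE n f).natDegree + 1),
        X (Fin.last (n+1)) ^ e * rename Fin.castSucc ((EE n f).coeff e) := by
  apply (EE n).injective
  rw [map_sum]
  simp_rw [map_mul, map_pow, EE_X_last, EE_rename]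
  conv_lhs => rw [Polynomial.as_sum_range' (EE n f) _ (Nat.lt_succ_self _)]
  exact Finset.sum_congr rfl fun e _ => by rw [mul_comm, Polynomial.C_mul_X_pow_eq_monomial]

theorem mem_map_iff_coeffE (n : ℕ) (J : Ideal (MvPolynomial (Fin (n+1)) ℂ))
    (f : MvPolynomial (Fin (n+2)) ℂ) :
    f ∈ Ideal.map (rename (Fin.castSucc : Fin (n+1) → Fin (n+2))).toRingHom J ↔
      ∀ e, (EE n f).coeff e ∈ J := by
  constructor
  · intro hf
    let K : Ideal (MvPolynomial (Fin (n+2)) ℂ) :=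
      { carrier := {g | ∀ e, (EE n g).coeff e ∈ J}
        add_mem' := fun {a b} ha hb e => by
          rw [map_add, Polynomial.coeff_add]; exact J.add_mem (ha e) (hb e)
        zero_mem' := fun e => by simp
        smul_mem' := fun c {g} hg e => by
          rw [smul_eq_mul, map_mul, Polynomial.coeff_mul]
          exact Ideal.sum_mem J fun p _ => Ideal.mul_mem_left J _ (hg p.2) }
    have hle : Ideal.map (rename (Fin.castSucc : Fin (n+1) → Fin (n+2))).toRingHom J ≤ K := by
      rw [Ideal.map_le_iff_le_comap]
      intro g hg e
      show ((EE n) ((rename Fin.castSucc) g)).coeff e ∈ J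
      rw [EE_rename, Polynomial.coeff_C]
      split
      · exact hg
      · exact J.zero_mem
    exact hle hf
  · intro h
    rw [decompE n f]
    exact Ideal.sum_mem _ fun e _ => Ideal.mul_mem_left _ _
      (Ideal.mem_map_of_mem _ (h e))

theorem coeffE_homog (n : ℕ) {f : MvPolynomial (Fin (n+2)) ℂ} {s : ℕ}
    (hf : f.IsHomogeneous s) (e : ℕ) (hne : (EE n f).coeff e ≠ 0) :
    e ≤ s ∧ ((EE n f).coeff e).IsHomogeneous (s - e) := by
  have hF : (rename (⇑(finRotate (n+2))) f).IsHomogeneous s := hf.rename_isHomogeneous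
  have hEq : (EE n f) = finSuccEquiv ℂ (n+1) (rename (⇑(finRotate (n+2))) f) := rfl
  rw [hEq] at hne ⊢
  have key : ∀ m : Fin (n+1) →₀ ℕ,
      coeff m ((finSuccEquiv ℂ (n+1) (rename (⇑(finRotate (n+2))) f)).coeff e) ≠ 0 →
      e + (Finsupp.weight 1) m = s := by
    intro m hm
    rw [finSuccEquiv_coeff_coeff] at hm
    have := hF hm
    rwa [weight_one_cons] at this
  obtain ⟨m, hm⟩ := MvPolynomial.ne_zero_iff.mp hne
  have h1 := key m hm
  refine ⟨by omega, fun d hd => ?_⟩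
  have := key d hd
  omega

theorem dehom_X_last (n : ℕ) : dehom (n+1) (X (Fin.last (n+1))) = X (Fin.last n) := by
  rw [dehom, aeval_X, ← Fin.succ_last, Fin.cases_succ]

theorem dehom_rename (n : ℕ) (g : MvPolynomial (Fin (n+1)) ℂ) :
    dehom (n+1) (rename Fin.castSucc g) = rename Fin.castSucc (dehom n g) := by
  have : ((dehom (n+1)).comp (rename (Fin.castSucc : Fin (n+1) → Fin (n+2)))) =
      ((rename (Fin.castSucc : Fin n → Fin (n+1))).comp (dehom n)) := by
    apply MvPolynomial.algHom_ext
    intro j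
    induction j using Fin.cases with
    | zero => simp [dehom]
    | succ i => simp [dehom, ← Fin.succ_castSucc]
  exact congrFun (congrArg (fun (h : _ →ₐ[ℂ] _) => h.toFun) this) g

theorem subz_rename (n : ℕ) (g : MvPolynomial (Fin n) ℂ) :
    aeval (Fin.lastCases 0 X) (rename (Fin.castSucc : Fin n → Fin (n+1)) g) = g := by
  have : ((aeval (Fin.lastCases 0 X) : MvPolynomial (Fin (n+1)) ℂ →ₐ[ℂ] MvPolynomial (Fin n) ℂ).comp
      (rename (Fin.castSucc : Fin n → Fin (n+1)))) = AlgHom.id ℂ _ := by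
    apply MvPolynomial.algHom_ext
    intro j
    simp
  exact congrFun (congrArg (fun (h : _ →ₐ[ℂ] _) => h.toFun) this) g

theorem subz_dvd (n : ℕ) (g : MvPolynomial (Fin (n+1)) ℂ) (h : X (Fin.last n) ∣ g) :
    aeval (Fin.lastCases 0 X) g = (0 : MvPolynomial (Fin n) ℂ) := by
  obtain ⟨h', rfl⟩ := h
  rw [map_mul, aeval_X, Fin.lastCases_last, zero_mul]

lemma snoc_cast {n : ℕ} (a : Fin n → ℤ) (e : ℕ) :
    (fun i => (((Fin.snoc a (e : ℤ) : Fin (n+1) → ℤ)) i : ℝ)) =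
      (Fin.snoc (fun i => ((a i : ℝ))) (e : ℝ) : Fin (n+1) → ℝ) := by
  funext i
  induction i using Fin.lastCases with
  | last => simp
  | cast j => simp

lemma mem_idealComponent {m : ℕ} {J : Ideal (MvPolynomial (Fin (m + 1)) ℂ)} {s : ℕ}
    {f : MvPolynomial (Fin (m + 1)) ℂ} :
    f ∈ idealComponent J s ↔ f ∈ J ∧ f.IsHomogeneous s := by
  rw [idealComponent, Submodule.mem_inf, mem_homogeneousSubmodule]
  exact and_congr_left fun _ => Iff.rfl

def PhiFun (n : ℕ) : ((Fin n → ℝ) × ℝ × ℝ) × ℝ → (Fin (n+1) → ℝ) × ℝ × ℝ :=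
  fun p => ((Fin.snoc p.1.1 p.2 : Fin (n+1) → ℝ), p.1.2.1 + p.2, p.1.2.2)

theorem gradedSemigroup_ext (n : ℕ)
    (v : MvPolynomial (Fin n) ℂ → Lex (Fin n → ℤ))
    (v' : MvPolynomial (Fin (n + 1)) ℂ → (Fin n → ℤ) × ℤ)
    (hv'_def : ∀ (e : ℕ) (g : MvPolynomial (Fin (n + 1)) ℂ),
      ¬ (X (Fin.last n) ∣ g) →
      v' (X (Fin.last n) ^ e * g) =
        (ofLex (v (aeval (Fin.lastCases 0 X) g)), (e : ℤ)))
    (I : Ideal (MvPolynomial (Fin (n + 1)) ℂ))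
    (I' : Ideal (MvPolynomial (Fin (n + 2)) ℂ))
    (hI' : I' = Ideal.map (rename (Fin.castSucc : Fin (n + 1) → Fin (n + 2))).toRingHom I) :
    gradedSemigroup (fun f => Fin.snoc (v' f).1 ((v' f).2 : ℤ)) I' =
      PhiFun n '' ((gradedSemigroup (fun f => ofLex (v f)) I) ×ˢ
        (Set.range (Nat.cast : ℕ → ℝ))) := by
  subst hI'
  ext p
  constructor
  · rintro ⟨s, t, α, ⟨f', ⟨⟨f, hf, rfl⟩, hf'ne⟩, rfl⟩, rfl⟩
    rw [SetLike.mem_coe, mem_idealComponent, ← Ideal.map_pow] at hf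
    obtain ⟨hfI, hfhom⟩ := hf
    rw [mem_map_iff_coeffE] at hfI
    have hf'ne : dehom (n+1) f ≠ 0 := hf'ne
    set N := (EE n f).natDegree + 1 with hN
    set k : ℕ → MvPolynomial (Fin n) ℂ := fun e => dehom n ((EE n f).coeff e) with hk
    have h_decomp : dehom (n+1) f = ∑ e ∈ Finset.range N,
        X (Fin.last n) ^ e * rename Fin.castSucc (k e) := by
      conv_lhs => rw [decompE n f]
      rw [map_sum]
      simp_rw [map_mul, map_pow, dehom_X_last, dehom_rename]
      rfl
    set T := (Finset.range N).filter (fun e => k e ≠ 0) with hT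
    have hTne : T.Nonempty := by
      rcases Finset.eq_empty_or_nonempty T with hTe | h
      · exfalso
        apply hf'ne
        rw [h_decomp]
        apply Finset.sum_eq_zero
        intro e he
        have : k e = 0 := by
          by_contra hke
          exact absurd (Finset.mem_filter.mpr ⟨he, hke⟩) (hTe ▸ Finset.notMem_empty e)
        rw [this, map_zero, mul_zero]
      · exact h
    set e₀ := T.min' hTne with he₀
    have he₀T : e₀ ∈ T := T.min'_mem hTne
    have hk₀ : k e₀ ≠ 0 := (Finset.mem_filter.mp he₀T).2
    have he₀N : e₀ ∈ Finset.range N := (Finset.mem_filter.mp he₀T).1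
    have hklt : ∀ e < e₀, k e = 0 := by
      intro e he
      by_contra hke
      have heN : e ∈ Finset.range N := by
        rw [Finset.mem_range] at he₀N ⊢; omega
      exact absurd (T.min'_le e (Finset.mem_filter.mpr ⟨heN, hke⟩)) (by omega)
    set g := ∑ e ∈ Finset.range N,
        (X (Fin.last n) : MvPolynomial (Fin (n+1)) ℂ) ^ (e - e₀) * rename Fin.castSucc (k e)
      with hg
    have h1 : dehom (n+1) f = X (Fin.last n) ^ e₀ * g := by
      rw [h_decomp, hg, Finset.mul_sum]
      apply Finset.sum_congr rfl
      intro e _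
      rcases le_or_gt e₀ e with hle | hlt
      · rw [← mul_assoc, ← pow_add, Nat.add_sub_cancel' hle]
      · simp [hklt e hlt]
    have h2 : aeval (Fin.lastCases 0 X) g = k e₀ := by
      rw [hg, map_sum]
      have hterm : ∀ e, aeval (Fin.lastCases 0 X)
          ((X (Fin.last n) : MvPolynomial (Fin (n+1)) ℂ) ^ (e - e₀) * rename Fin.castSucc (k e))
          = (0 : MvPolynomial (Fin n) ℂ) ^ (e - e₀) * k e := by
        intro e
        rw [map_mul, map_pow, aeval_X, Fin.lastCases_last, subz_rename]
      simp_rw [hterm]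
      rw [Finset.sum_eq_single_of_mem e₀ he₀N]
      · simp
      · intro e _ hne
        rcases lt_or_gt_of_ne hne with hlt | hgt
        · rw [hklt e hlt, mul_zero]
        · rw [zero_pow (by omega : e - e₀ ≠ 0), zero_mul]
    have h3 : ¬ X (Fin.last n) ∣ g := by
      intro hd
      exact hk₀ (h2 ▸ subz_dvd _ _ hd)
    have hv := hv'_def e₀ g h3
    rw [h2] at hv
    have hwval : (Fin.snoc (v' (dehom (n+1) f)).1 ((v' (dehom (n+1) f)).2 : ℤ) : Fin (n+1) → ℤ) =
        (Fin.snoc (ofLex (v (k e₀))) ((e₀ : ℕ) : ℤ) : Fin (n+1) → ℤ) := by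
      rw [h1, hv]
    have hc₀ : (EE n f).coeff e₀ ≠ 0 := fun h => hk₀ (by rw [hk]; simp only; rw [h, map_zero])
    obtain ⟨he₀s, hhom⟩ := coeffE_homog n hfhom e₀ hc₀
    refine ⟨(((fun i => ((ofLex (v (k e₀)) i : ℤ) : ℝ)), ((s - e₀ : ℕ) : ℝ), (t : ℝ)), (e₀ : ℝ)),
      ⟨⟨s - e₀, t, ofLex (v (k e₀)), ⟨k e₀, ⟨⟨(EE n f).coeff e₀, ?_, rfl⟩, hk₀⟩, rfl⟩, rfl⟩,
        ⟨e₀, rfl⟩⟩, ?_⟩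
    · rw [SetLike.mem_coe, mem_idealComponent]
      exact ⟨hfI e₀, hhom⟩
    · rw [PhiFun]
      refine Prod.ext ?_ (Prod.ext ?_ rfl)
      · simp only
        rw [hwval, snoc_cast]
      · simp only
        push_cast [Nat.cast_sub he₀s]
        ring
  · rintro ⟨⟨q, er⟩, ⟨hq, ⟨e, rfl⟩⟩, rfl⟩
    obtain ⟨s', t, a, ⟨h', ⟨⟨h, hmem, rfl⟩, hne⟩, rfl⟩, rfl⟩ := hq
    rw [SetLike.mem_coe, mem_idealComponent] at hmem
    obtain ⟨hmemI, hmemhom⟩ := hmem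
    have hne : dehom n h ≠ 0 := hne
    set f := X (Fin.last (n+1)) ^ e * rename Fin.castSucc h with hf
    have hd : dehom (n+1) f = X (Fin.last n) ^ e * rename Fin.castSucc (dehom n h) := by
      rw [hf, map_mul, map_pow, dehom_X_last, dehom_rename]
    have hrne : rename (Fin.castSucc : Fin n → Fin (n+1)) (dehom n h) ≠ 0 := by
      intro hz
      exact hne (rename_injective _ (Fin.castSucc_injective n) (by rw [hz, map_zero]))
    have hnd : ¬ X (Fin.last n) ∣ rename Fin.castSucc (dehom n h) := by
      intro hdvd
      exact hne (by rw [← subz_rename n (dehom n h), subz_dvd _ _ hdvd])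
    have hv := hv'_def e (rename Fin.castSucc (dehom n h)) hnd
    rw [subz_rename] at hv
    refine ⟨e + s', t, (Fin.snoc (ofLex (v (dehom n h))) ((e : ℕ) : ℤ) : Fin (n+1) → ℤ),
      ⟨dehom (n+1) f, ⟨⟨f, ?_, rfl⟩, ?_⟩, ?_⟩, ?_⟩
    · rw [SetLike.mem_coe, mem_idealComponent, ← Ideal.map_pow]
      constructor
      · exact Ideal.mul_mem_left _ _ (Ideal.mem_map_of_mem _ hmemI)
      · exact (isHomogeneous_X_pow _ e).mul hmemhom.rename_isHomogeneous
    · rw [hd]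
      exact mul_ne_zero (pow_ne_zero _ (X_ne_zero _)) hrne
    · rw [hd]
      simp only [hv]
    · rw [PhiFun]
      refine Prod.ext ?_ (Prod.ext ?_ rfl)
      · simp only
        rw [snoc_cast]
      · simp only
        push_cast
        ring

section Cone
variable {E F : Type*} [AddCommGroup E] [Module ℝ E] [TopologicalSpace E]
  [AddCommGroup F] [Module ℝ F] [TopologicalSpace F]

lemma subset_cchull (U : Set E) : U ⊆ closedConvexConeHull U :=
  fun _ hx => Set.mem_sInter.mpr fun _ hC => hC.1 hx

lemma cchull_min {U C : Set E} (hU : U ⊆ C) (h1 : IsClosed C) (h2 : Convex ℝ C)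
    (h3 : ∀ c : ℝ, 0 ≤ c → ∀ x ∈ C, c • x ∈ C) : closedConvexConeHull U ⊆ C :=
  Set.sInter_subset_of_mem ⟨hU, h1, h2, h3⟩

lemma cchull_isClosed (U : Set E) : IsClosed (closedConvexConeHull U) :=
  isClosed_sInter fun _ hC => hC.2.1

lemma cchull_convex (U : Set E) : Convex ℝ (closedConvexConeHull U) :=
  convex_sInter fun _ hC => hC.2.2.1

lemma cchull_smul (U : Set E) {c : ℝ} (hc : 0 ≤ c) {x : E}
    (hx : x ∈ closedConvexConeHull U) : c • x ∈ closedConvexConeHull U :=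
  Set.mem_sInter.mpr fun C hC => hC.2.2.2 c hc x (Set.mem_sInter.mp hx C hC)

lemma cchull_add (U : Set E) {x y : E} (hx : x ∈ closedConvexConeHull U)
    (hy : y ∈ closedConvexConeHull U) : x + y ∈ closedConvexConeHull U := by
  have hmid := cchull_convex U hx hy (by norm_num : (0:ℝ) ≤ 1/2)
    (by norm_num : (0:ℝ) ≤ 1/2) (by norm_num)
  have h2 := cchull_smul U (by norm_num : (0:ℝ) ≤ 2) hmid
  have : (2:ℝ) • ((1/2 : ℝ) • x + (1/2 : ℝ) • y) = x + y := by
    rw [smul_add, smul_smul, smul_smul]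
    norm_num
  rwa [this] at h2

lemma image_cchull_subset (L : E ≃ₗ[ℝ] F) (hL : Continuous L) (S : Set E) :
    ⇑L '' closedConvexConeHull S ⊆ closedConvexConeHull (⇑L '' S) := by
  rintro _ ⟨x, hx, rfl⟩
  have key : closedConvexConeHull S ⊆ ⇑L ⁻¹' closedConvexConeHull (⇑L '' S) := by
    apply cchull_min
    · exact fun y hy => subset_cchull _ ⟨y, hy, rfl⟩
    · exact (cchull_isClosed _).preimage hL
    · exact (cchull_convex _).linear_preimage (L : E →ₗ[ℝ] F)
    · intro c hc z hz
      rw [Set.mem_preimage, map_smul]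
      exact cchull_smul _ hc hz
  exact key hx

lemma cchull_image (L : E ≃ₗ[ℝ] F) (hL : Continuous L) (hL' : Continuous L.symm) (S : Set E) :
    closedConvexConeHull (⇑L '' S) = ⇑L '' closedConvexConeHull S := by
  apply subset_antisymm
  · intro x hx
    have h1 := image_cchull_subset L.symm hL' (⇑L '' S) ⟨x, hx, rfl⟩
    have h2 : ⇑L.symm '' (⇑L '' S) = S := by
      rw [Set.image_image]; simp
    rw [h2] at h1
    exact ⟨L.symm x, h1, by simp⟩
  · exact image_cchull_subset L hL S

lemma cchull_prod_nat (S : Set E) (h0 : (0 : E) ∈ S) :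
    closedConvexConeHull (S ×ˢ (Set.range (Nat.cast : ℕ → ℝ))) =
      (closedConvexConeHull S) ×ˢ (Set.Ici (0 : ℝ)) := by
  apply subset_antisymm
  · apply cchull_min
    · rintro ⟨x, r⟩ ⟨hx, ⟨m, rfl⟩⟩
      exact ⟨subset_cchull _ hx, Set.mem_Ici.mpr (Nat.cast_nonneg m)⟩
    · exact (cchull_isClosed _).prod isClosed_Ici
    · exact (cchull_convex _).prod (convex_Ici 0)
    · rintro c hc ⟨x, r⟩ ⟨hx, hr⟩
      exact ⟨cchull_smul _ hc hx, show (0:ℝ) ≤ c • r from smul_nonneg hc (show (0:ℝ) ≤ r from hr)⟩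
  · rintro ⟨x, r⟩ ⟨hx, hr⟩
    have h1 : (x, (0:ℝ)) ∈ closedConvexConeHull (S ×ˢ (Set.range (Nat.cast : ℕ → ℝ))) := by
      have hD : closedConvexConeHull S ⊆
          {y : E | (y, (0:ℝ)) ∈ closedConvexConeHull (S ×ˢ (Set.range (Nat.cast : ℕ → ℝ)))} := by
        apply cchull_min
        · intro y hy
          exact subset_cchull _ ⟨hy, ⟨0, by norm_num⟩⟩
        · exact IsClosed.preimage (by fun_prop) (cchull_isClosed _)
        · intro y hy z hz a b ha hb hab
          have := cchull_convex _ hy hz ha hb hab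
          simpa [Prod.smul_mk, Prod.mk_add_mk, smul_zero] using this
        · intro c hc y hy
          have := cchull_smul _ hc hy
          simpa [Prod.smul_mk, smul_zero] using this
      exact hD hx
    have h2 : ((0:E), r) ∈ closedConvexConeHull (S ×ˢ (Set.range (Nat.cast : ℕ → ℝ))) := by
      have hm : ((0:E), (1:ℝ)) ∈ S ×ˢ (Set.range (Nat.cast : ℕ → ℝ)) := ⟨h0, ⟨1, by norm_num⟩⟩
      have := cchull_smul _ hr (subset_cchull _ hm)
      simpa [Prod.smul_mk, smul_zero, smul_eq_mul] using this
    have := cchull_add _ h1 h2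
    simpa using this

end Cone

noncomputable def PhiLin (n : ℕ) : (((Fin n → ℝ) × ℝ × ℝ) × ℝ) ≃ₗ[ℝ] ((Fin (n+1) → ℝ) × ℝ × ℝ) where
  toFun := PhiFun n
  invFun := fun q => (((fun i => q.1 i.castSucc), q.2.1 - q.1 (Fin.last n), q.2.2),
    q.1 (Fin.last n))
  map_add' := by
    rintro ⟨⟨a, s, t⟩, e⟩ ⟨⟨b, s', t'⟩, f⟩
    refine Prod.ext ?_ (Prod.ext ?_ ?_) <;> simp [PhiFun]
    · funext i
      induction i using Fin.lastCases <;> simp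
    · ring
  map_smul' := by
    rintro c ⟨⟨a, s, t⟩, e⟩
    refine Prod.ext ?_ (Prod.ext ?_ ?_) <;> simp [PhiFun]
    · funext i
      induction i using Fin.lastCases <;> simp
    · ring
  left_inv := by
    rintro ⟨⟨a, s, t⟩, e⟩
    refine Prod.ext (Prod.ext ?_ (Prod.ext ?_ ?_)) ?_ <;> simp [PhiFun]
  right_inv := by
    rintro ⟨b, s, t⟩
    refine Prod.ext ?_ (Prod.ext ?_ ?_) <;> simp [PhiFun]
    funext i
    induction i using Fin.lastCases <;> simp

lemma PhiLin_continuous (n : ℕ) : Continuous (PhiLin n) := by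
  show Continuous (PhiFun n)
  refine Continuous.prodMk ?_ (Continuous.prodMk ?_ ?_)
  · apply continuous_pi
    intro i
    induction i using Fin.lastCases with
    | last => simpa only [Fin.snoc_last] using (continuous_snd)
    | cast j =>
        simp only [Fin.snoc_castSucc]
        exact (continuous_apply j).comp (continuous_fst.comp continuous_fst)
  · exact ((continuous_fst.comp (continuous_snd.comp continuous_fst))).add continuous_snd
  · exact continuous_snd.comp (continuous_snd.comp continuous_fst)

lemma PhiLin_symm_continuous (n : ℕ) : Continuous (PhiLin n).symm := by
  show Continuous (fun q : (Fin (n+1) → ℝ) × ℝ × ℝ =>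
    ((((fun i => q.1 i.castSucc) : Fin n → ℝ), q.2.1 - q.1 (Fin.last n), q.2.2),
      q.1 (Fin.last n)))
  refine Continuous.prodMk (Continuous.prodMk ?_ (Continuous.prodMk ?_ ?_)) ?_
  · exact continuous_pi fun i => (continuous_apply _).comp continuous_fst
  · exact (continuous_fst.comp continuous_snd).sub ((continuous_apply _).comp continuous_fst)
  · exact continuous_snd.comp continuous_snd
  · exact (continuous_apply _).comp continuous_fst

/-- Let `v` be a `ℤⁿ`-valued valuation on `ℂ[x₁,…,xₙ]` with
`#v(L∖{0}) = dim L` for all finite-dimensional subspaces `L`, and let `v'` be its extension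
to `ℂ[x₁,…,x_{n+1}]`, `v'(x_{n+1}^e·g) = (v(g|_{x_{n+1}=0}), e)`. Let `I ⊆ ℂ[x₀,…,xₙ]` be a
homogeneous ideal and `I' ⊆ ℂ[x₀,…,x_{n+1}]` its extension. Then
`Δ(I') = Δ(I) × ℝ_{≥0}` for the associated Newton–Okounkov bodies. -/
theorem NObody_extension (n : ℕ)
    (v : MvPolynomial (Fin n) ℂ → Lex (Fin n → ℤ))
    (hv_mul : ∀ f g : MvPolynomial (Fin n) ℂ, f ≠ 0 → g ≠ 0 → v (f * g) = v f + v g)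
    (hv_add : ∀ f g : MvPolynomial (Fin n) ℂ, f ≠ 0 → g ≠ 0 → f + g ≠ 0 →
      min (v f) (v g) ≤ v (f + g))
    (hv_const : ∀ c : ℂ, c ≠ 0 → v (C c) = 0)
    (hv_card : ∀ L : Submodule ℂ (MvPolynomial (Fin n) ℂ), FiniteDimensional ℂ L →
      (v '' ((L : Set (MvPolynomial (Fin n) ℂ)) \ {0})).ncard = Module.finrank ℂ L)
    (v' : MvPolynomial (Fin (n + 1)) ℂ → (Fin n → ℤ) × ℤ)
    (hv'_def : ∀ (e : ℕ) (g : MvPolynomial (Fin (n + 1)) ℂ),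
      ¬ (X (Fin.last n) ∣ g) →
      v' (X (Fin.last n) ^ e * g) =
        (ofLex (v (aeval (Fin.lastCases 0 X) g)), (e : ℤ)))
    (I : Ideal (MvPolynomial (Fin (n + 1)) ℂ))
    (hI : ∃ S : Set (MvPolynomial (Fin (n + 1)) ℂ),
      (∀ f ∈ S, ∃ e : ℕ, f.IsHomogeneous e) ∧ I = Ideal.span S)
    (I' : Ideal (MvPolynomial (Fin (n + 2)) ℂ))
    (hI' : I' = Ideal.map (rename (Fin.castSucc : Fin (n + 1) → Fin (n + 2))).toRingHom I) :
    NObody (fun f => Fin.snoc (v' f).1 ((v' f).2 : ℤ)) I' =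
      {q : Fin (n + 2) → ℝ |
        (fun i : Fin (n + 1) => q i.castSucc) ∈ NObody (fun f => ofLex (v f)) I ∧
        0 ≤ q (Fin.last (n + 1))} := by
  have hA := gradedSemigroup_ext n v v' hv'_def I I' hI'
  have hU0 : (0 : (Fin n → ℝ) × ℝ × ℝ) ∈ gradedSemigroup (fun f => ofLex (v f)) I := by
    refine ⟨0, 0, ofLex (v 1), ⟨(1 : MvPolynomial (Fin n) ℂ),
      ⟨⟨(1 : MvPolynomial (Fin (n+1)) ℂ), ?_, map_one _⟩, one_ne_zero⟩, rfl⟩, ?_⟩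
    · rw [SetLike.mem_coe, mem_idealComponent]
      exact ⟨by simp [Ideal.one_eq_top], isHomogeneous_one _ _⟩
    · have hv1 : v 1 = 0 := by
        have := hv_const 1 one_ne_zero
        rwa [map_one] at this
      symm
      refine Prod.ext (funext fun i => ?_) (Prod.ext ?_ ?_) <;> simp [hv1] <;> rfl
  have hK : closedConvexConeHull
        (gradedSemigroup (fun f => Fin.snoc (v' f).1 ((v' f).2 : ℤ)) I') =
      ⇑(PhiLin n) ''
        ((closedConvexConeHull (gradedSemigroup (fun f => ofLex (v f)) I)) ×ˢ Set.Ici (0:ℝ)) := by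
    rw [hA]
    have hphi : PhiFun n = ⇑(PhiLin n) := rfl
    rw [hphi, cchull_image (PhiLin n) (PhiLin_continuous n) (PhiLin_symm_continuous n),
      cchull_prod_nat _ hU0]
  ext q
  simp only [NObody, Set.mem_image, Set.mem_setOf_eq]
  constructor
  · rintro ⟨⟨b, sb⟩, hbd, rfl⟩
    have hbd' : ((b, sb).1, (b, sb).2, (1:ℝ)) ∈ closedConvexConeHull
        (gradedSemigroup (fun f => Fin.snoc (v' f).1 ((v' f).2 : ℤ)) I') := hbd
    rw [hK] at hbd'
    obtain ⟨⟨⟨a, s', t'⟩, e⟩, hmem, heq⟩ := hbd'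
    obtain ⟨hKmem, he⟩ := hmem
    have h1 : (Fin.snoc a e : Fin (n+1) → ℝ) = b := congrArg Prod.fst heq
    have h2 : s' + e = sb := congrArg (fun p => p.2.1) heq
    have h3 : t' = (1:ℝ) := congrArg (fun p => p.2.2) heq
    subst h1 h2 h3
    have he' : (0:ℝ) ≤ e := he
    have hsum : (∑ i, (Fin.snoc a e : Fin (n+1) → ℝ) i) = (∑ i, a i) + e := by
      rw [Fin.sum_univ_castSucc]
      simp
    have huD : (a, s') ∈ underlineDelta (fun f => ofLex (v f)) I := hKmem
    constructor
    · refine ⟨(a, s'), huD, ?_⟩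
      funext i
      induction i using Fin.cases with
      | zero =>
          show tauMap n (a, s') 0 = tauMap (n+1) _ (Fin.castSucc 0)
          rw [Fin.castSucc_zero]
          show s' - ∑ i, a i = (s' + e - ∑ i, (Fin.snoc a e : Fin (n+1) → ℝ) i)
          rw [hsum]
          ring
      | succ j =>
          show tauMap n (a, s') j.succ = tauMap (n+1) _ (Fin.castSucc j.succ)
          rw [← Fin.succ_castSucc]
          show a j = (Fin.snoc a e : Fin (n+1) → ℝ) j.castSucc
          rw [Fin.snoc_castSucc]
    · show (0:ℝ) ≤ tauMap (n+1) _ (Fin.last (n+1))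
      rw [← Fin.succ_last]
      show (0:ℝ) ≤ (Fin.snoc a e : Fin (n+1) → ℝ) (Fin.last n)
      rw [Fin.snoc_last]
      exact he'
  · rintro ⟨⟨⟨a, s'⟩, huD, heq⟩, h2⟩
    set e := q (Fin.last (n+1)) with hedef
    refine ⟨((Fin.snoc a e : Fin (n+1) → ℝ), s' + e), ?_, ?_⟩
    · show ((Fin.snoc a e : Fin (n+1) → ℝ), s' + e, (1:ℝ)) ∈ closedConvexConeHull
          (gradedSemigroup (fun f => Fin.snoc (v' f).1 ((v' f).2 : ℤ)) I')
      rw [hK]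
      exact ⟨((a, s', (1:ℝ)), e), ⟨huD, h2⟩, rfl⟩
    · funext j
      induction j using Fin.cases with
      | zero =>
          show (s' + e - ∑ i, (Fin.snoc a e : Fin (n+1) → ℝ) i) = q 0
          have h0 := congrFun heq 0
          rw [Fin.castSucc_zero] at h0
          have h0' : s' - ∑ i, a i = q 0 := h0
          rw [Fin.sum_univ_castSucc]
          simp only [Fin.snoc_castSucc, Fin.snoc_last]
          rw [← h0']
          ring
      | succ i =>
          show (Fin.snoc a e : Fin (n+1) → ℝ) i = q i.succ
          induction i using Fin.lastCases with
          | last => rw [Fin.snoc_last, Fin.succ_last]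
          | cast j =>
              rw [Fin.snoc_castSucc, Fin.succ_castSucc]
              have h1 := congrFun heq j.succ
              exact h1
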